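/- Let S be a countable set, let μ be a Borel probability measure on {0,1}^S having positive correlations, and let ε ∈ [0,1]. Then μ^{(-,ε)} has positive correlations. -/

import Mathlib

/-!
Configurations on a countable set `S` are `η : S → Bool` (`true` = 1, `false` = 0), with
the product topology and product σ-algebra. The measures `μ^{(-,ε)}` and `μ^{(+,ε)}` are
characterized by their values on the generating π-systems of cylinder events
`{η ≡ 1 on F}` (resp. `{η ≡ 0 on F}`), `F` finite: if `X ∼ μ` and, independently,
`Z = (Z s)` is i.i.d. with `P(Z s = 1) = 1 - ε`, then the law `ν` of `s ↦ min (X s) (Z s)`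
satisfies `ν{η ≡ 1 on F} = (1-ε)^{|F|} μ{η ≡ 1 on F}`, and this determines `ν` uniquely
among Borel probability measures; dually for `max` with `P(Z s = 1) = ε`.
-/

open MeasureTheory Filter Topology

variable {S : Type*} [Countable S]

/-- Stochastic domination `μ ≼ ν`: `∫ f dμ ≤ ∫ f dν` for every bounded continuous `f`
that is nondecreasing with respect to the coordinatewise partial order. -/
def StochDom (μ ν : Measure (S → Bool)) : Prop :=
  ∀ f : (S → Bool) → ℝ, Continuous f → (∃ C, ∀ x, |f x| ≤ C) → Monotone f →
    ∫ x, f x ∂μ ≤ ∫ x, f x ∂ν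

/-- Weak convergence `μₙ → μ`: convergence of the integrals of all bounded continuous
functions. -/
def WeakConv (μn : ℕ → Measure (S → Bool)) (μ : Measure (S → Bool)) : Prop :=
  ∀ f : (S → Bool) → ℝ, Continuous f → (∃ C, ∀ x, |f x| ≤ C) →
    Tendsto (fun n => ∫ x, f x ∂(μn n)) atTop (𝓝 (∫ x, f x ∂μ))

/-- `ν = μ^{(-,ε)}`: `ν` is the law of `s ↦ min (X s) (Z s)`, `X ∼ μ`, `Z` an independent
i.i.d. field with `P(Z s = 1) = 1 - ε`, characterized on the cylinders `{η ≡ 1 on F}`. -/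
def IsMinusEps (μ ν : Measure (S → Bool)) (ε : ℝ) : Prop :=
  ∀ F : Finset S,
    ν {η | ∀ s ∈ F, η s = true} =
      ENNReal.ofReal ((1 - ε) ^ F.card) * μ {η | ∀ s ∈ F, η s = true}

/-- `ν = μ^{(+,ε)}`: `ν` is the law of `s ↦ max (X s) (Z s)`, `X ∼ μ`, `Z` an independent
i.i.d. field with `P(Z s = 1) = ε`, characterized on the cylinders `{η ≡ 0 on F}`. -/
def IsPlusEps (μ ν : Measure (S → Bool)) (ε : ℝ) : Prop :=
  ∀ F : Finset S,
    ν {η | ∀ s ∈ F, η s = false} =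
      ENNReal.ofReal ((1 - ε) ^ F.card) * μ {η | ∀ s ∈ F, η s = false}

/-- `μ` has positive correlations: `∫ fg dμ ≥ ∫ f dμ ∫ g dμ` for all bounded measurable
functions that are nondecreasing with respect to the coordinatewise partial order. -/
def PositiveCorrelations (μ : Measure (S → Bool)) : Prop :=
  ∀ f g : (S → Bool) → ℝ, Measurable f → Measurable g →
    (∃ C, ∀ x, |f x| ≤ C) → (∃ C, ∀ x, |g x| ≤ C) → Monotone f → Monotone g →
    (∫ x, f x ∂μ) * (∫ x, g x ∂μ) ≤ ∫ x, f x * g x ∂μ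

namespace MinusEpsAux

attribute [local instance] Classical.propDecidable

set_option linter.unusedSectionVars false

variable {S : Type*} [Countable S]

/-- cylinder set -/
def cyl (F : Finset S) : Set (S → Bool) := {η | ∀ s ∈ F, η s = true}

lemma cyl_eq (F : Finset S) : cyl F = ⋂ s ∈ F, (fun η : S → Bool => η s) ⁻¹' {true} := by
  ext η; simp [cyl]

lemma measurableSet_cyl (F : Finset S) : MeasurableSet (cyl F) := by
  rw [cyl_eq]
  exact MeasurableSet.biInter F.countable_toSet
    (fun s _ => measurable_pi_apply s (MeasurableSet.singleton true))

lemma cyl_inter (F G : Finset S) : cyl F ∩ cyl G = cyl (F ∪ G) := by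
  ext η; simp only [cyl, Set.mem_inter_iff, Set.mem_setOf_eq, Finset.mem_union]
  constructor
  · rintro ⟨h1, h2⟩ s (h | h); exacts [h1 s h, h2 s h]
  · intro h; exact ⟨fun s hs => h s (Or.inl hs), fun s hs => h s (Or.inr hs)⟩

lemma isPiSystem_cyl : IsPiSystem (Set.range (cyl (S := S))) := by
  rintro _ ⟨F, rfl⟩ _ ⟨G, rfl⟩ _
  exact ⟨F ∪ G, (cyl_inter F G).symm⟩

lemma cyl_empty : cyl (∅ : Finset S) = Set.univ := by ext η; simp [cyl]

lemma cyl_singleton (s : S) : cyl {s} = {η : S → Bool | η s = true} := by ext η; simp [cyl]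

lemma generateFrom_cyl :
    (MeasurableSpace.pi : MeasurableSpace (S → Bool)) =
      MeasurableSpace.generateFrom (Set.range (cyl (S := S))) := by
  apply le_antisymm
  · refine iSup_le fun s => ?_
    intro t ht
    obtain ⟨u, -, rfl⟩ := ht
    have hT : MeasurableSet[MeasurableSpace.generateFrom (Set.range (cyl (S := S)))] (cyl {s}) :=
      MeasurableSpace.measurableSet_generateFrom ⟨{s}, rfl⟩
    have : (fun η : S → Bool => η s) ⁻¹' u =
        (if true ∈ u then cyl {s} else ∅) ∪ (if false ∈ u then (cyl {s})ᶜ else ∅) := by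
      ext η
      by_cases hη : η s = true <;>
        simp [cyl, hη, Set.mem_preimage, apply_ite (η ∈ ·)] <;>
      · constructor
        · intro h; split <;> simp_all
        · intro h
          rcases h with h | h <;> split at h <;> simp_all
    rw [this]
    have hE : MeasurableSet[MeasurableSpace.generateFrom (Set.range (cyl (S := S)))]
        (∅ : Set (S → Bool)) := @MeasurableSet.empty _ (MeasurableSpace.generateFrom (Set.range (cyl (S := S))))
    have h1 : MeasurableSet[MeasurableSpace.generateFrom (Set.range (cyl (S := S)))]
        (if true ∈ u then cyl {s} else ∅) := by split; exacts [hT, hE]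
    have h2 : MeasurableSet[MeasurableSpace.generateFrom (Set.range (cyl (S := S)))]
        (if false ∈ u then (cyl {s})ᶜ else ∅) := by split; exacts [hT.compl, hE]
    exact @MeasurableSet.union _ (MeasurableSpace.generateFrom (Set.range (cyl (S := S)))) _ _ h1 h2
  · rw [MeasurableSpace.generateFrom_le_iff]
    rintro _ ⟨F, rfl⟩
    exact measurableSet_cyl F

/-- Two probability measures agreeing on cylinders agree. -/
lemma ext_cyl {μ₁ μ₂ : Measure (S → Bool)} [IsProbabilityMeasure μ₁] [IsProbabilityMeasure μ₂]
    (h : ∀ F : Finset S, μ₁ (cyl F) = μ₂ (cyl F)) : μ₁ = μ₂ := by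
  refine ext_of_generate_finite _ generateFrom_cyl isPiSystem_cyl ?_ (by simp)
  rintro _ ⟨F, rfl⟩; exact h F

noncomputable def vol01 : Measure ℝ := volume.restrict (Set.Ico (0:ℝ) 1)

instance : IsProbabilityMeasure vol01 :=
  ⟨by rw [vol01, Measure.restrict_apply MeasurableSet.univ, Set.univ_inter, Real.volume_Ico]; simp⟩

variable (p : ℝ)

noncomputable def step (x : ℝ) : ℝ := if x < p then x / p else (x - p) / (1 - p)

noncomputable def digit (n : ℕ) (x : ℝ) : Bool := decide ((step p)^[n] x < p)

lemma measurable_step : Measurable (step p) := by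
  unfold step
  exact Measurable.ite (measurableSet_lt measurable_id measurable_const)
    (measurable_id.div_const p) ((measurable_id.sub_const p).div_const (1 - p))

lemma measurable_digit (n : ℕ) : Measurable (digit p n) := by
  refine measurable_to_countable' fun b => ?_
  have h : MeasurableSet {x : ℝ | (step p)^[n] x < p} :=
    measurableSet_lt ((measurable_step p).iterate n) measurable_const
  cases b
  · have : digit p n ⁻¹' {false} = {x : ℝ | (step p)^[n] x < p}ᶜ := by
      ext x; simp [digit]
    rw [this]; exact h.compl
  · have : digit p n ⁻¹' {true} = {x : ℝ | (step p)^[n] x < p} := by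
      ext x; simp [digit]
    rw [this]; exact h

lemma digit_succ (n : ℕ) (x : ℝ) : digit p (n + 1) x = digit p n (step p x) := by
  simp [digit, Function.iterate_succ_apply]
  congr 1

variable {p}

/-- scaling branch: measure of {x ∈ [0,a) | x/a ∈ B} = a * vol(B ∩ [0,1)) for 0 < a. -/
lemma branch_scale {a : ℝ} (ha : 0 < a) {B : Set ℝ} (hB : MeasurableSet B) :
    volume ((fun x => x / a) ⁻¹' B ∩ Set.Ico 0 a) = ENNReal.ofReal a * vol01 B := by
  have key : (fun x => x / a) ⁻¹' B ∩ Set.Ico 0 a = (fun x => x / a) ⁻¹' (B ∩ Set.Ico 0 1) := by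
    ext x
    simp only [Set.mem_inter_iff, Set.mem_preimage, Set.mem_Ico]
    constructor
    · rintro ⟨h1, h2, h3⟩
      exact ⟨h1, div_nonneg h2 ha.le, (div_lt_one ha).2 h3⟩
    · rintro ⟨h1, h2, h3⟩
      refine ⟨h1, ?_, (div_lt_one ha).1 h3⟩
      have := (le_div_iff₀ ha).1 h2
      linarith
  have hfun : (fun x : ℝ => x / a) = (a⁻¹ * ·) := funext fun x => div_eq_inv_mul x a
  rw [key, hfun, Real.volume_preimage_mul_left (by positivity : a⁻¹ ≠ 0)]
  simp only [inv_inv, abs_of_pos ha, vol01, Measure.restrict_apply hB]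

/-- translation+scaling branch -/
lemma branch_translate (hp1 : p < 1) {B : Set ℝ} (hB : MeasurableSet B) :
    volume ((fun x => (x - p) / (1 - p)) ⁻¹' B ∩ Set.Ico p 1)
      = ENNReal.ofReal (1 - p) * vol01 B := by
  have hq : 0 < 1 - p := by linarith
  have key : (fun x => (x - p) / (1 - p)) ⁻¹' B ∩ Set.Ico p 1
      = (fun x => x - p) ⁻¹' ((fun x => x / (1 - p)) ⁻¹' B ∩ Set.Ico 0 (1 - p)) := by
    ext x
    simp only [Set.mem_inter_iff, Set.mem_preimage, Set.mem_Ico]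
    constructor
    · rintro ⟨h1, h2, h3⟩; exact ⟨h1, by linarith, by linarith⟩
    · rintro ⟨h1, h2, h3⟩; exact ⟨h1, by linarith, by linarith⟩
  have htr := measure_preimage_add_right (volume : Measure ℝ) (-p)
      ((fun x => x / (1 - p)) ⁻¹' B ∩ Set.Ico 0 (1 - p))
  simp only [← sub_eq_add_neg] at htr
  rw [key, htr, branch_scale hq hB]

lemma measurableSet_digitSet (N : Finset ℕ) :
    MeasurableSet {x : ℝ | ∀ n ∈ N, digit p n x = true} := by
  have : {x : ℝ | ∀ n ∈ N, digit p n x = true} = ⋂ n ∈ N, (digit p n) ⁻¹' {true} := by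
    ext x; simp
  rw [this]
  exact MeasurableSet.biInter N.countable_toSet
    (fun n _ => measurable_digit p n (MeasurableSet.singleton true))

lemma vol01_digits (hp0 : 0 < p) (hp1 : p < 1) :
    ∀ (k : ℕ) (N : Finset ℕ), (∀ n ∈ N, n < k) →
      vol01 {x | ∀ n ∈ N, digit p n x = true} = ENNReal.ofReal (p ^ N.card) := by
  intro k
  induction k with
  | zero =>
    intro N hN
    have hNe : N = ∅ := Finset.eq_empty_of_forall_notMem fun n hn =>
      Nat.not_lt_zero n (hN n hn)
    subst hNe
    have : {x : ℝ | ∀ n ∈ (∅ : Finset ℕ), digit p n x = true} = Set.univ := by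
      ext x; simp
    rw [this]
    simp
  | succ k ih =>
    intro N hN
    classical
    set N' : Finset ℕ := (N.erase 0).image (· - 1) with hN'def
    have hinj : Set.InjOn (· - 1) (N.erase 0 : Finset ℕ) := by
      intro n hn m hm h
      have hn0 : n ≠ 0 := (Finset.mem_erase.1 hn).1
      have hm0 : m ≠ 0 := (Finset.mem_erase.1 hm).1
      simp only at h
      omega
    have hcard : N'.card = (N.erase 0).card := Finset.card_image_of_injOn hinj
    have hNk : ∀ m ∈ N', m < k := by
      intro m hm
      obtain ⟨n, hn, rfl⟩ := Finset.mem_image.1 hm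
      have := hN n (Finset.mem_of_mem_erase hn)
      have := (Finset.mem_erase.1 hn).1
      omega
    have hmemN' : ∀ m, m ∈ N' ↔ m + 1 ∈ N := by
      intro m
      simp only [hN'def, Finset.mem_image, Finset.mem_erase]
      constructor
      · rintro ⟨n, ⟨hn0, hn⟩, rfl⟩
        have : n - 1 + 1 = n := by omega
        rwa [this]
      · intro h; exact ⟨m + 1, ⟨Nat.succ_ne_zero m, h⟩, rfl⟩
    set T : Set ℝ := {x | ∀ n ∈ N, digit p n x = true} with hTdef
    set T' : Set ℝ := {x | ∀ m ∈ N', digit p m x = true} with hT'def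
    have hT' : MeasurableSet T' := measurableSet_digitSet N'
    have hT : MeasurableSet T := measurableSet_digitSet N
    have hmem : ∀ x : ℝ, x ∈ T ↔ ((0 ∈ N → x < p) ∧ step p x ∈ T') := by
      intro x
      constructor
      · intro hx
        constructor
        · intro h0
          have := hx 0 h0
          by_contra hc
          simp [digit, hc] at this
        · intro m hm
          rw [← digit_succ]
          exact hx (m + 1) ((hmemN' m).1 hm)
      · rintro ⟨h0, hstep⟩ n hn
        match n with
        | 0 => simp [digit, h0 hn]
        | Nat.succ m =>
          rw [digit_succ]
          exact hstep m ((hmemN' m).2 hn)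
    have hIH : vol01 T' = ENNReal.ofReal (p ^ N'.card) := ih N' hNk
    -- decompose
    have hsplit : T ∩ Set.Ico (0:ℝ) 1 = (T ∩ Set.Ico 0 p) ∪ (T ∩ Set.Ico p 1) := by
      rw [← Set.inter_union_distrib_left, Set.Ico_union_Ico_eq_Ico hp0.le hp1.le]
    have hTlow : T ∩ Set.Ico (0:ℝ) p = (fun x => x / p) ⁻¹' T' ∩ Set.Ico 0 p := by
      ext x
      simp only [Set.mem_inter_iff, Set.mem_Ico, Set.mem_preimage]
      constructor
      · rintro ⟨hx, hx0, hxp⟩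
        have := (hmem x).1 hx
        have hstep : step p x = x / p := if_pos hxp
        exact ⟨by rw [← hstep]; exact this.2, hx0, hxp⟩
      · rintro ⟨hx, hx0, hxp⟩
        refine ⟨(hmem x).2 ⟨fun _ => hxp, ?_⟩, hx0, hxp⟩
        rw [show step p x = x / p from if_pos hxp]
        exact hx
    have hvlow : volume (T ∩ Set.Ico (0:ℝ) p) = ENNReal.ofReal p * vol01 T' := by
      rw [hTlow, branch_scale hp0 hT']
    have hvol : vol01 T = volume (T ∩ Set.Ico (0:ℝ) p) + volume (T ∩ Set.Ico p 1) := by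
      rw [vol01, Measure.restrict_apply hT, hsplit]
      refine measure_union ?_ (hT.inter measurableSet_Ico)
      exact (Set.disjoint_left.2 fun x hx hx' => absurd hx.2 (not_lt.2 hx'.1)).mono
        Set.inter_subset_right Set.inter_subset_right
    by_cases h0 : 0 ∈ N
    · have hThigh : T ∩ Set.Ico p 1 = ∅ := by
        ext x
        simp only [Set.mem_inter_iff, Set.mem_Ico, Set.mem_empty_iff_false, iff_false]
        rintro ⟨hx, hxp, -⟩
        exact absurd (((hmem x).1 hx).1 h0) (not_lt.2 hxp)
      obtain ⟨m, hm⟩ : ∃ m, N.card = m + 1 :=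
        ⟨N.card - 1, (Nat.succ_pred_eq_of_pos (Finset.card_pos.2 ⟨0, h0⟩)).symm⟩
      have hcard' : N'.card = m := by
        rw [hcard, Finset.card_erase_of_mem h0, hm]; omega
      rw [hvol, hThigh, measure_empty, add_zero, hvlow, hIH, hcard', hm,
        ← ENNReal.ofReal_mul hp0.le, pow_succ, mul_comm]
    · have hThigh : T ∩ Set.Ico p 1
          = (fun x => (x - p) / (1 - p)) ⁻¹' T' ∩ Set.Ico p 1 := by
        ext x
        simp only [Set.mem_inter_iff, Set.mem_Ico, Set.mem_preimage]
        constructor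
        · rintro ⟨hx, hxp, hx1⟩
          have := (hmem x).1 hx
          have hstep : step p x = (x - p) / (1 - p) := if_neg (not_lt.2 hxp)
          exact ⟨by rw [← hstep]; exact this.2, hxp, hx1⟩
        · rintro ⟨hx, hxp, hx1⟩
          refine ⟨(hmem x).2 ⟨fun h => absurd h h0, ?_⟩, hxp, hx1⟩
          rw [show step p x = (x - p) / (1 - p) from if_neg (not_lt.2 hxp)]
          exact hx
      have hcard' : N'.card = N.card := by
        rw [hcard, Finset.erase_eq_of_notMem h0]
      rw [hvol, hvlow, hThigh, branch_translate hp1 hT', hIH, hcard', ← add_mul,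
        ← ENNReal.ofReal_add hp0.le (by linarith : (0:ℝ) ≤ 1 - p)]
      norm_num

section Pi
variable {S : Type*} [Countable S] {p : ℝ}

lemma measurable_digitMap (p : ℝ) (e : S → ℕ) :
    Measurable (fun x (s : S) => digit p (e s) x) :=
  measurable_pi_lambda _ fun s => measurable_digit p (e s)

/-- Existence of the Bernoulli product measure on `S → Bool`. -/
lemma exists_bernoulli_prod (hp0 : 0 < p) (hp1 : p < 1) :
    ∃ π : Measure (S → Bool), IsProbabilityMeasure π ∧
      ∀ F : Finset S, π (cyl F) = ENNReal.ofReal (p ^ F.card) := by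
  obtain ⟨e, he⟩ := Countable.exists_injective_nat S
  refine ⟨Measure.map (fun x (s : S) => digit p (e s) x) vol01,
    Measure.isProbabilityMeasure_map (measurable_digitMap p e).aemeasurable, fun F => ?_⟩
  rw [Measure.map_apply (measurable_digitMap p e) (measurableSet_cyl F)]
  have hpre : (fun x (s : S) => digit p (e s) x) ⁻¹' cyl F
      = {x | ∀ n ∈ F.image e, digit p n x = true} := by
    ext x
    simp only [Set.mem_preimage, cyl, Set.mem_setOf_eq, Finset.mem_image]
    constructor
    · rintro h n ⟨s, hs, rfl⟩; exact h s hs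
    · intro h s hs; exact h (e s) ⟨s, hs, rfl⟩
  rw [hpre, vol01_digits hp0 hp1 ((F.image e).sup id + 1) _
    (fun n hn => Nat.lt_succ_of_le (Finset.le_sup (f := id) hn)),
    Finset.card_image_of_injOn he.injOn]

variable (π : Measure (S → Bool)) [IsProbabilityMeasure π]

/-- combine: coordinates in `J` from the first argument, the rest from the second. -/
noncomputable def combine (J : Finset S) (η ζ : S → Bool) : S → Bool := fun s => if s ∈ J then η s else ζ s

lemma monotone_combine (J : Finset S) : Monotone (fun q : (S → Bool) × (S → Bool) => combine J q.1 q.2) := by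
  intro q q' hq s
  by_cases h : s ∈ J <;> simp only [combine, h, if_true, if_false]
  · exact hq.1 s
  · exact hq.2 s

omit [Countable S] in
lemma measurable_combine (J : Finset S) :
    Measurable (fun q : (S → Bool) × (S → Bool) => combine J q.1 q.2) := by
  refine measurable_pi_lambda _ fun s => ?_
  unfold combine
  by_cases h : s ∈ J <;> simp only [h, if_true, if_false]
  · exact (measurable_pi_apply s).comp measurable_fst
  · exact (measurable_pi_apply s).comp measurable_snd

variable {π}

lemma map_combine (hπ : ∀ F : Finset S, π (cyl F) = ENNReal.ofReal (p ^ F.card))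
    (hp0 : 0 ≤ p) (J : Finset S) :
    Measure.map (fun q : (S → Bool) × (S → Bool) => combine J q.1 q.2) (π.prod π) = π := by
  have : IsProbabilityMeasure (Measure.map
      (fun q : (S → Bool) × (S → Bool) => combine J q.1 q.2) (π.prod π)) :=
    Measure.isProbabilityMeasure_map (measurable_combine J).aemeasurable
  refine ext_cyl fun F => ?_
  rw [Measure.map_apply (measurable_combine J) (measurableSet_cyl F)]
  have hpre : (fun q : (S → Bool) × (S → Bool) => combine J q.1 q.2) ⁻¹' cyl F
      = (cyl (F ∩ J)) ×ˢ (cyl (F \ J)) := by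
    ext q
    simp only [Set.mem_preimage, cyl, Set.mem_setOf_eq, Set.mem_prod, Finset.mem_inter,
      Finset.mem_sdiff, combine]
    constructor
    · intro h
      constructor
      · rintro s ⟨hsF, hsJ⟩; have := h s hsF; rwa [if_pos hsJ] at this
      · rintro s ⟨hsF, hsJ⟩; have := h s hsF; rwa [if_neg hsJ] at this
    · rintro ⟨h1, h2⟩ s hsF
      by_cases hsJ : s ∈ J
      · rw [if_pos hsJ]; exact h1 s ⟨hsF, hsJ⟩
      · rw [if_neg hsJ]; exact h2 s ⟨hsF, hsJ⟩
  rw [hpre, Measure.prod_prod, hπ, hπ, hπ, ← ENNReal.ofReal_mul (by positivity), ← pow_add]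
  congr 2
  rw [Finset.card_inter_add_card_sdiff]

lemma integrable_bdd {α : Type*} [MeasurableSpace α] (μ : Measure α) [IsFiniteMeasure μ]
    {H : α → ℝ} (hm : AEStronglyMeasurable H μ) {C : ℝ} (hC : ∀ x, |H x| ≤ C) :
    Integrable H μ :=
  ⟨hm, HasFiniteIntegral.of_bounded (ae_of_all _ fun x => by
    simpa [Real.norm_eq_abs] using hC x)⟩

/-- single-coordinate update -/
noncomputable def upd (s : S) (b : Bool) (η : S → Bool) : S → Bool :=
  fun t => if t = s then b else η t

omit [Countable S] in
lemma measurable_upd (s : S) (b : Bool) : Measurable (upd s b) := by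
  refine measurable_pi_lambda _ fun t => ?_
  unfold upd
  by_cases h : t = s <;> simp only [h, if_true, if_false]
  · exact measurable_const
  · exact measurable_pi_apply t

omit [Countable S] in
lemma monotone_upd (s : S) (b : Bool) : Monotone (upd s b) := by
  intro η ζ h t
  unfold upd
  split
  · exact le_rfl
  · exact h t

omit [Countable S] in
lemma upd_le_upd (s : S) (η : S → Bool) : upd s false η ≤ upd s true η := by
  intro t
  unfold upd
  split
  · exact Bool.false_le _
  · exact le_rfl

omit [Countable S] in
lemma combine_single (s : S) (η ζ : S → Bool) : combine {s} η ζ = upd s (η s) ζ := by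
  funext t
  by_cases h : t = s
  · subst h; simp [combine, upd]
  · simp [combine, upd, h]

lemma integral_eval (hπ : ∀ F : Finset S, π (cyl F) = ENNReal.ofReal (p ^ F.card))
    (hp0 : 0 ≤ p) (s : S) (k : Bool → ℝ) :
    ∫ η, k (η s) ∂π = p * k true + (1 - p) * k false := by
  have hfun : (fun η : S → Bool => k (η s))
      = fun η => k false + (k true - k false) * Set.indicator (cyl {s}) (fun _ => 1) η := by
    funext η
    rcases Bool.eq_false_or_eq_true (η s) with h | h
    · have hmem : η ∈ cyl {s} := by simp [cyl_singleton, h]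
      simp only [h, Set.indicator_of_mem hmem]
      ring
    · have hmem : η ∉ cyl {s} := by simp [cyl_singleton, h]
      simp [h, Set.indicator_of_notMem hmem]
  have hind : Integrable (fun η => (k true - k false) * Set.indicator (cyl {s}) (fun _ => (1:ℝ)) η) π := by
    exact (((integrable_const (1:ℝ)).indicator (measurableSet_cyl {s}))).const_mul _
  rw [hfun, integral_add (integrable_const _) hind, integral_const, integral_const_mul,
    integral_indicator_const _ (measurableSet_cyl {s}), measureReal_def, measureReal_def, hπ]
  simp only [Finset.card_singleton, pow_one, measure_univ, ENNReal.toReal_one,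
    ENNReal.toReal_ofReal hp0, smul_eq_mul, mul_one, one_smul]
  ring

lemma integral_decomp (hπ : ∀ F : Finset S, π (cyl F) = ENNReal.ofReal (p ^ F.card))
    (hp0 : 0 ≤ p) (s : S) {H : (S → Bool) → ℝ} (hm : Measurable H)
    {C : ℝ} (hC : ∀ x, |H x| ≤ C) :
    ∫ η, H η ∂π = p * ∫ ζ, H (upd s true ζ) ∂π + (1 - p) * ∫ ζ, H (upd s false ζ) ∂π := by
  conv_lhs => rw [← map_combine hπ hp0 {s}]
  rw [integral_map (measurable_combine {s}).aemeasurable hm.aestronglyMeasurable]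
  rw [integral_prod (fun q : (S → Bool) × (S → Bool) => H (combine {s} q.1 q.2))
    (integrable_bdd _ ((hm.comp (measurable_combine {s})).aestronglyMeasurable)
      (fun q => hC _))]
  have : (fun η => ∫ ζ, H (combine {s} η ζ) ∂π)
      = fun η => ∫ ζ, H (upd s (η s) ζ) ∂π := by
    funext η
    congr 1
    funext ζ
    rw [combine_single]
  rw [this]
  exact integral_eval hπ hp0 s (fun b => ∫ ζ, H (upd s b ζ) ∂π)

/-- `F` depends only on coordinates in `J`. -/
def DepOn (F : (S → Bool) → ℝ) (J : Finset S) : Prop :=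
  ∀ η ζ, (∀ s ∈ J, η s = ζ s) → F η = F ζ

lemma harris_finite {CF CG : ℝ} (hπ : ∀ F : Finset S, π (cyl F) = ENNReal.ofReal (p ^ F.card))
    (hp0 : 0 ≤ p) (hp1 : p ≤ 1) (J : Finset S) :
    ∀ (F G : (S → Bool) → ℝ), Measurable F → Measurable G →
      (∀ x, |F x| ≤ CF) → (∀ x, |G x| ≤ CG) → Monotone F → Monotone G →
      DepOn F J → DepOn G J →
      (∫ x, F x ∂π) * (∫ x, G x ∂π) ≤ ∫ x, F x * G x ∂π := by
  classical
  induction J using Finset.induction_on with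
  | empty =>
    intro F G hmF hmG hCF hCG hFm hGm hdF hdG
    have hF : F = fun _ => F (fun _ => false) :=
      funext fun η => hdF η _ (by simp)
    have hG : G = fun _ => G (fun _ => false) :=
      funext fun η => hdG η _ (by simp)
    rw [hF, hG]
    simp [integral_const]
  | @insert s J hs ih =>
    intro F G hmF hmG hCF hCG hFm hGm hdF hdG
    have hCF0 : 0 ≤ CF := le_trans (abs_nonneg _) (hCF (fun _ => false))
    have hCG0 : 0 ≤ CG := le_trans (abs_nonneg _) (hCG (fun _ => false))
    set Ft := fun η => F (upd s true η) with hFt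
    set Ff := fun η => F (upd s false η) with hFf
    set Gt := fun η => G (upd s true η) with hGt
    set Gf := fun η => G (upd s false η) with hGf
    have hdep : ∀ (H : (S → Bool) → ℝ), DepOn H (insert s J) → ∀ b,
        DepOn (fun η => H (upd s b η)) J := by
      intro H hd b η ζ hagree
      refine hd _ _ fun t ht => ?_
      rcases Finset.mem_insert.1 ht with rfl | ht
      · simp [upd]
      · have hts : t ≠ s := fun h => hs (h ▸ ht)
        simp only [upd, if_neg hts]
        exact hagree t ht
    have hFG : ∀ x, |F x * G x| ≤ CF * CG := fun x => by
      rw [abs_mul]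
      exact mul_le_mul (hCF x) (hCG x) (abs_nonneg _) hCF0
    have hdecF := integral_decomp hπ hp0 s hmF hCF
    have hdecG := integral_decomp hπ hp0 s hmG hCG
    have hdecFG := integral_decomp hπ hp0 s (H := fun x => F x * G x) (hmF.mul hmG) hFG
    have hIH1 := ih Ft Gt (hmF.comp (measurable_upd s true)) (hmG.comp (measurable_upd s true))
      (fun x => hCF _) (fun x => hCG _) (hFm.comp (monotone_upd s true))
      (hGm.comp (monotone_upd s true)) (hdep F hdF true) (hdep G hdG true)
    have hIH0 := ih Ff Gf (hmF.comp (measurable_upd s false)) (hmG.comp (measurable_upd s false))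
      (fun x => hCF _) (fun x => hCG _) (hFm.comp (monotone_upd s false))
      (hGm.comp (monotone_upd s false)) (hdep F hdF false) (hdep G hdG false)
    have hintF : ∀ b, Integrable (fun η => F (upd s b η)) π := fun b =>
      integrable_bdd _ ((hmF.comp (measurable_upd s b)).aestronglyMeasurable) (fun x => hCF _)
    have hintG : ∀ b, Integrable (fun η => G (upd s b η)) π := fun b =>
      integrable_bdd _ ((hmG.comp (measurable_upd s b)).aestronglyMeasurable) (fun x => hCG _)
    have hmonF : ∫ η, Ff η ∂π ≤ ∫ η, Ft η ∂π :=
      integral_mono (hintF false) (hintF true) (fun η => hFm (upd_le_upd s η))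
    have hmonG : ∫ η, Gf η ∂π ≤ ∫ η, Gt η ∂π :=
      integral_mono (hintG false) (hintG true) (fun η => hGm (upd_le_upd s η))
    rw [hdecF, hdecG, hdecFG]
    have hq0 : 0 ≤ 1 - p := by linarith
    set at_ := ∫ η, Ft η ∂π
    set af := ∫ η, Ff η ∂π
    set bt := ∫ η, Gt η ∂π
    set bf := ∫ η, Gf η ∂π
    have h1 : at_ * bt ≤ ∫ x, Ft x * Gt x ∂π := hIH1
    have h0 : af * bf ≤ ∫ x, Ff x * Gf x ∂π := hIH0
    have key : (p * at_ + (1 - p) * af) * (p * bt + (1 - p) * bf)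
        ≤ p * (at_ * bt) + (1 - p) * (af * bf) := by
      nlinarith [mul_nonneg (mul_nonneg hp0 hq0) (mul_nonneg (sub_nonneg.2 hmonF) (sub_nonneg.2 hmonG))]
    calc (p * at_ + (1 - p) * af) * (p * bt + (1 - p) * bf)
        ≤ p * (at_ * bt) + (1 - p) * (af * bf) := key
      _ ≤ p * (∫ x, Ft x * Gt x ∂π) + (1 - p) * (∫ x, Ff x * Gf x ∂π) := by
          have := mul_le_mul_of_nonneg_left h1 hp0
          have := mul_le_mul_of_nonneg_left h0 hq0
          linarith
      _ = p * ∫ ζ, (F (upd s true ζ)) * (G (upd s true ζ)) ∂π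
          + (1 - p) * ∫ ζ, (F (upd s false ζ)) * (G (upd s false ζ)) ∂π := rfl

/-- σ-algebra generated by the coordinates in `J`. -/
def mJ (J : Finset S) : MeasurableSpace (S → Bool) :=
  MeasurableSpace.comap (J.restrict) MeasurableSpace.pi

omit [Countable S] in
lemma measurable_restrict' (J : Finset S) :
    Measurable (J.restrict : (S → Bool) → (J → Bool)) :=
  measurable_pi_lambda _ fun i => measurable_pi_apply _

omit [Countable S] in
lemma mJ_le (J : Finset S) : mJ J ≤ (MeasurableSpace.pi : MeasurableSpace (S → Bool)) :=
  (measurable_restrict' J).comap_le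

omit [Countable S] in
lemma mJ_mono {J K : Finset S} (h : J ⊆ K) : mJ J ≤ mJ K := by
  have hfact : (J.restrict : (S → Bool) → (J → Bool)) = Finset.restrict₂ h ∘ K.restrict := rfl
  have hr2 : Measurable (Finset.restrict₂ (π := fun _ : S => Bool) h) :=
    measurable_pi_lambda _ fun i => measurable_pi_apply _
  rw [mJ, hfact, ← MeasurableSpace.comap_comp]
  exact MeasurableSpace.comap_mono hr2.comap_le

/-- The smoothing operator: average out the coordinates outside `J`. -/
noncomputable def TJ (π : Measure (S → Bool)) (J : Finset S) (F : (S → Bool) → ℝ) :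
    (S → Bool) → ℝ :=
  fun η => ∫ ζ, F (combine J η ζ) ∂π

variable {F G : (S → Bool) → ℝ} {CF CG : ℝ}

omit [Countable S] in
lemma measurable_combine_right (J : Finset S) (η : S → Bool) :
    Measurable (fun ζ => combine J η ζ) := by
  refine measurable_pi_lambda _ fun s => ?_
  by_cases h : s ∈ J <;> simp only [combine, h, if_true, if_false]
  · exact measurable_const
  · exact measurable_pi_apply s

lemma measurable_TJ (J : Finset S) (hm : Measurable F) : Measurable (TJ π J F) := by
  have h : StronglyMeasurable fun q : (S → Bool) × (S → Bool) => F (combine J q.1 q.2) :=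
    (hm.comp (measurable_combine J)).stronglyMeasurable
  exact h.integral_prod_right'.measurable

lemma abs_TJ_le (J : Finset S) (hC : ∀ x, |F x| ≤ CF) (η : S → Bool) : |TJ π J F η| ≤ CF := by
  have := norm_integral_le_of_norm_le_const
    (ae_of_all π fun ζ => by simpa [Real.norm_eq_abs] using hC (combine J η ζ))
    (f := fun ζ => F (combine J η ζ))
  simpa [TJ, Real.norm_eq_abs, measure_univ] using this

lemma monotone_TJ (J : Finset S) (hm : Measurable F) (hC : ∀ x, |F x| ≤ CF)
    (hmon : Monotone F) : Monotone (TJ π J F) := by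
  intro η η' hη
  refine integral_mono
    (integrable_bdd _ ((hm.comp (measurable_combine_right J η)).aestronglyMeasurable)
      (fun ζ => hC _))
    (integrable_bdd _ ((hm.comp (measurable_combine_right J η')).aestronglyMeasurable)
      (fun ζ => hC _)) fun ζ => ?_
  exact hmon (monotone_combine J (Prod.mk_le_mk.2 ⟨hη, le_rfl⟩))

omit [Countable S] in
lemma depOn_TJ (J : Finset S) : DepOn (TJ π J F) J := by
  intro η ζ hagree
  unfold TJ
  congr 1
  funext ξ
  congr 1
  funext t
  unfold combine
  split
  · next h => exact hagree t h
  · rfl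

lemma setIntegral_TJ (hπ : ∀ F : Finset S, π (cyl F) = ENNReal.ofReal (p ^ F.card))
    (hp0 : 0 ≤ p) (J : Finset S) (hm : Measurable F) (hC : ∀ x, |F x| ≤ CF)
    {A : Set (S → Bool)} (hA : MeasurableSet[mJ J] A) :
    ∫ η in A, TJ π J F η ∂π = ∫ η in A, F η ∂π := by
  have hAm : MeasurableSet A := mJ_le J _ hA
  have hkey : ∀ η ζ : S → Bool, (combine J η ζ ∈ A ↔ η ∈ A) := by
    obtain ⟨B, -, rfl⟩ := hA
    intro η ζ
    simp only [Set.mem_preimage]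
    have : J.restrict (combine J η ζ) = J.restrict η := by
      funext i
      simp only [Finset.restrict, combine, if_pos i.2]
    rw [this]
  have hCF0 : 0 ≤ CF := le_trans (abs_nonneg _) (hC (fun _ => false))
  have hindC : ∀ x, |A.indicator F x| ≤ CF := by
    intro x
    by_cases hx : x ∈ A
    · rw [Set.indicator_of_mem hx]; exact hC x
    · rw [Set.indicator_of_notMem hx]; simpa using hCF0
  have hRHS : ∫ η in A, F η ∂π = ∫ η, (∫ ζ, A.indicator F (combine J η ζ) ∂π) ∂π := by
    rw [← integral_indicator hAm]
    conv_lhs => rw [← map_combine hπ hp0 J]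
    rw [integral_map (measurable_combine J).aemeasurable
        ((hm.indicator hAm).aestronglyMeasurable),
      integral_prod (fun q : (S → Bool) × (S → Bool) => A.indicator F (combine J q.1 q.2))
        (integrable_bdd _ (((hm.indicator hAm).comp
          (measurable_combine J)).aestronglyMeasurable) (fun q => hindC _))]
  rw [hRHS, ← integral_indicator hAm]
  refine integral_congr_ae (ae_of_all _ fun η => ?_)
  by_cases hηA : η ∈ A
  · rw [Set.indicator_of_mem hηA]
    show TJ π J F η = ∫ ζ, A.indicator F (combine J η ζ) ∂π
    refine integral_congr_ae (ae_of_all _ fun ζ => ?_)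
    show F (combine J η ζ) = A.indicator F (combine J η ζ)
    rw [Set.indicator_of_mem ((hkey η ζ).2 hηA)]
  · rw [Set.indicator_of_notMem hηA]
    show (0:ℝ) = ∫ ζ, A.indicator F (combine J η ζ) ∂π
    rw [show (fun ζ => A.indicator F (combine J η ζ)) = fun _ => (0:ℝ) from
      funext fun ζ => Set.indicator_of_notMem (fun h => hηA ((hkey η ζ).1 h)) F]
    simp

lemma integral_TJ (hπ : ∀ F : Finset S, π (cyl F) = ENNReal.ofReal (p ^ F.card))
    (hp0 : 0 ≤ p) (J : Finset S) (hm : Measurable F) (hC : ∀ x, |F x| ≤ CF) :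
    ∫ η, TJ π J F η ∂π = ∫ η, F η ∂π := by
  have := setIntegral_TJ hπ hp0 J hm hC (A := Set.univ) ⟨Set.univ, MeasurableSet.univ, by simp⟩
  simpa using this

lemma TJ_ae_eq_condexp (hπ : ∀ F : Finset S, π (cyl F) = ENNReal.ofReal (p ^ F.card))
    (hp0 : 0 ≤ p) (J : Finset S) (hm : Measurable F) (hC : ∀ x, |F x| ≤ CF) :
    TJ π J F =ᵐ[π] π[F | mJ J] := by
  classical
  have hle : mJ J ≤ (MeasurableSpace.pi : MeasurableSpace (S → Bool)) := mJ_le J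
  haveI : IsFiniteMeasure (π.trim hle) := isFiniteMeasure_trim hle
  refine ae_eq_condExp_of_forall_setIntegral_eq hle
    (integrable_bdd _ hm.aestronglyMeasurable hC)
    (fun A hA _ => ((integrable_bdd _ (measurable_TJ J hm).aestronglyMeasurable
      (abs_TJ_le J hC)).integrableOn))
    (fun A hA _ => setIntegral_TJ hπ hp0 J hm hC hA) ?_
  -- strongly measurable wrt mJ J
  set cmb : (J → Bool) → (S → Bool) → (S → Bool) :=
    fun σ ζ s => if hs : s ∈ J then σ ⟨s, hs⟩ else ζ s with hcmb
  have hcmb_meas : Measurable fun q : (J → Bool) × (S → Bool) => cmb q.1 q.2 := by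
    refine measurable_pi_lambda _ fun s => ?_
    by_cases hs : s ∈ J
    · simp only [hcmb, dif_pos hs]
      exact (measurable_pi_apply _).comp measurable_fst
    · simp only [hcmb, dif_neg hs]
      exact (measurable_pi_apply _).comp measurable_snd
  have hTJeq : TJ π J F = (fun σ => ∫ ζ, F (cmb σ ζ) ∂π) ∘ J.restrict := by
    funext η
    show (∫ ζ, F (combine J η ζ) ∂π) = ∫ ζ, F (cmb (J.restrict η) ζ) ∂π
    have heq : (fun ζ => combine J η ζ) = fun ζ => cmb (J.restrict η) ζ := by
      funext ζ
      funext s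
      by_cases h : s ∈ J
      · simp [combine, hcmb, h, Finset.restrict]
      · simp [combine, hcmb, h, Finset.restrict]
    exact congrArg (fun u => ∫ ζ, F (u ζ) ∂π) heq
  have hh : Measurable fun σ : J → Bool => ∫ ζ, F (cmb σ ζ) ∂π :=
    ((hm.comp hcmb_meas).stronglyMeasurable.integral_prod_right').measurable
  have hmeas : Measurable[mJ J] (TJ π J F) := by
    rw [hTJeq]
    exact hh.comp (Measurable.of_comap_le le_rfl)
  exact (hmeas.stronglyMeasurable : StronglyMeasurable[mJ J] _).aestronglyMeasurable

lemma harris_pi (hπ : ∀ F : Finset S, π (cyl F) = ENNReal.ofReal (p ^ F.card))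
    (hp0 : 0 ≤ p) (hp1 : p ≤ 1) : PositiveCorrelations π := by
  rintro f g hmf hmg ⟨Cf, hCf⟩ ⟨Cg, hCg⟩ hfm hgm
  classical
  obtain ⟨e, he⟩ := Countable.exists_injective_nat S
  have hCf0 : 0 ≤ Cf := le_trans (abs_nonneg _) (hCf (fun _ => false))
  have hCg0 : 0 ≤ Cg := le_trans (abs_nonneg _) (hCg (fun _ => false))
  set Jn : ℕ → Finset S := fun n => (Set.Finite.preimage he.injOn (Set.finite_Iio n)).toFinset
    with hJndef
  have hmem : ∀ (n : ℕ) (s : S), s ∈ Jn n ↔ e s < n := by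
    intro n s
    simp [hJndef, Set.Finite.mem_toFinset]
  have hJmono : Monotone Jn := by
    intro n m hnm s hs
    rw [hmem] at hs ⊢
    omega
  set ℱ : Filtration ℕ (MeasurableSpace.pi : MeasurableSpace (S → Bool)) :=
    ⟨fun n => mJ (Jn n), fun _ _ h => mJ_mono (hJmono h), fun n => mJ_le _⟩ with hFdef
  have hsup : (⨆ n, mJ (Jn n)) = (MeasurableSpace.pi : MeasurableSpace (S → Bool)) := by
    refine le_antisymm (iSup_le fun n => mJ_le _) ?_
    refine iSup_le fun s => ?_
    refine le_trans ?_ (le_iSup (fun n => mJ (Jn n)) (e s + 1))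
    have hs : s ∈ Jn (e s + 1) := (hmem _ s).2 (Nat.lt_succ_self _)
    have hfactor : (fun η : S → Bool => η s)
        = (fun σ : (Jn (e s + 1) : Finset S) → Bool => σ ⟨s, hs⟩) ∘ (Jn (e s + 1)).restrict :=
      rfl
    calc MeasurableSpace.comap (fun η : S → Bool => η s) inferInstance
        = MeasurableSpace.comap ((Jn (e s + 1)).restrict)
            (MeasurableSpace.comap (fun σ : (Jn (e s + 1) : Finset S) → Bool => σ ⟨s, hs⟩)
              inferInstance) := by
          rw [MeasurableSpace.comap_comp, ← hfactor]
      _ ≤ mJ (Jn (e s + 1)) :=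
          MeasurableSpace.comap_mono (measurable_pi_apply (⟨s, hs⟩ : (Jn (e s + 1) : Finset S))).comap_le
  have hintf : Integrable f π := integrable_bdd _ hmf.aestronglyMeasurable hCf
  have hintg : Integrable g π := integrable_bdd _ hmg.aestronglyMeasurable hCg
  have hsmf : StronglyMeasurable[⨆ n, ℱ n] f := by
    rw [show (⨆ n, (ℱ n : MeasurableSpace (S → Bool))) = MeasurableSpace.pi from hsup]
    exact hmf.stronglyMeasurable
  have hsmg : StronglyMeasurable[⨆ n, ℱ n] g := by
    rw [show (⨆ n, (ℱ n : MeasurableSpace (S → Bool))) = MeasurableSpace.pi from hsup]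
    exact hmg.stronglyMeasurable
  have htendf := hintf.tendsto_ae_condExp hsmf
  have htendg := hintg.tendsto_ae_condExp hsmg
  have haef : ∀ᵐ η ∂π, ∀ n, TJ π (Jn n) f η = (π[f| ℱ n]) η :=
    ae_all_iff.2 fun n => TJ_ae_eq_condexp hπ hp0 (Jn n) hmf hCf
  have haeg : ∀ᵐ η ∂π, ∀ n, TJ π (Jn n) g η = (π[g| ℱ n]) η :=
    ae_all_iff.2 fun n => TJ_ae_eq_condexp hπ hp0 (Jn n) hmg hCg
  have hlim : ∀ᵐ η ∂π, Tendsto (fun n => TJ π (Jn n) f η * TJ π (Jn n) g η) atTop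
      (𝓝 (f η * g η)) := by
    filter_upwards [htendf, htendg, haef, haeg] with η h1 h2 h3 h4
    have h1' : Tendsto (fun n => TJ π (Jn n) f η) atTop (𝓝 (f η)) := by
      rw [show (fun n => TJ π (Jn n) f η) = fun n => (π[f| ℱ n]) η from funext h3]
      exact h1
    have h2' : Tendsto (fun n => TJ π (Jn n) g η) atTop (𝓝 (g η)) := by
      rw [show (fun n => TJ π (Jn n) g η) = fun n => (π[g| ℱ n]) η from funext h4]
      exact h2
    exact h1'.mul h2'
  have hDCT : Tendsto (fun n => ∫ η, TJ π (Jn n) f η * TJ π (Jn n) g η ∂π) atTop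
      (𝓝 (∫ η, f η * g η ∂π)) := by
    refine tendsto_integral_of_dominated_convergence (fun _ => Cf * Cg)
      (fun n => ((measurable_TJ (Jn n) hmf).mul (measurable_TJ (Jn n) hmg)).aestronglyMeasurable)
      (integrable_const _) (fun n => ae_of_all _ fun η => ?_) hlim
    rw [Real.norm_eq_abs, abs_mul]
    exact mul_le_mul (abs_TJ_le (Jn n) hCf η) (abs_TJ_le (Jn n) hCg η) (abs_nonneg _) hCf0
  refine ge_of_tendsto' hDCT fun n => ?_
  have h := harris_finite hπ hp0 hp1 (Jn n) (TJ π (Jn n) f) (TJ π (Jn n) g)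
    (measurable_TJ (Jn n) hmf) (measurable_TJ (Jn n) hmg)
    (abs_TJ_le (Jn n) hCf) (abs_TJ_le (Jn n) hCg)
    (monotone_TJ (Jn n) hmf hCf hfm) (monotone_TJ (Jn n) hmg hCg hgm)
    (depOn_TJ (Jn n)) (depOn_TJ (Jn n))
  rwa [integral_TJ hπ hp0 (Jn n) hmf hCf, integral_TJ hπ hp0 (Jn n) hmg hCg] at h

end Pi



section Main

variable {S : Type*} [Countable S]

/-- the `min`/`and` coupling map -/
def band : ((S → Bool) × (S → Bool)) → (S → Bool) := fun q s => q.1 s && q.2 s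

lemma measurable_band : Measurable (band (S := S)) := by
  refine measurable_pi_lambda _ fun s => ?_
  refine measurable_to_countable' fun b => ?_
  have hm1 : Measurable fun q : (S → Bool) × (S → Bool) => q.1 s :=
    (measurable_pi_apply s).comp measurable_fst
  have hm2 : Measurable fun q : (S → Bool) × (S → Bool) => q.2 s :=
    (measurable_pi_apply s).comp measurable_snd
  have h : MeasurableSet ((fun q : (S → Bool) × (S → Bool) => q.1 s) ⁻¹' {true}
      ∩ (fun q : (S → Bool) × (S → Bool) => q.2 s) ⁻¹' {true}) :=
    (hm1 (MeasurableSet.singleton true)).inter (hm2 (MeasurableSet.singleton true))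
  cases b
  · have heq : (fun q : (S → Bool) × (S → Bool) => band q s) ⁻¹' {false}
        = ((fun q : (S → Bool) × (S → Bool) => q.1 s) ⁻¹' {true}
          ∩ (fun q : (S → Bool) × (S → Bool) => q.2 s) ⁻¹' {true})ᶜ := by
      ext q; simp [band, Bool.and_eq_true]
    rw [heq]; exact h.compl
  · have heq : (fun q : (S → Bool) × (S → Bool) => band q s) ⁻¹' {true}
        = (fun q : (S → Bool) × (S → Bool) => q.1 s) ⁻¹' {true}
          ∩ (fun q : (S → Bool) × (S → Bool) => q.2 s) ⁻¹' {true} := by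
      ext q; simp [band, Bool.and_eq_true]
    rw [heq]; exact h

lemma monotone_band : Monotone (band (S := S)) := by
  intro q q' h s
  have hb : ∀ a a' b b' : Bool, a ≤ a' → b ≤ b' → (a && b) ≤ (a' && b') := by decide
  exact hb _ _ _ _ (h.1 s) (h.2 s)

lemma measurable_band_right (x : S → Bool) : Measurable fun z : S → Bool => band (x, z) := by
  refine measurable_pi_lambda _ fun s => ?_
  show Measurable fun z : S → Bool => x s && z s
  cases hxs : x s
  · simp only [Bool.false_and]; exact measurable_const
  · simp only [Bool.true_and]; exact measurable_pi_apply s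

end Main

end MinusEpsAux

open MinusEpsAux in
theorem minusEps_positive_correlations (μ : Measure (S → Bool)) [IsProbabilityMeasure μ]
    (hμ : PositiveCorrelations μ) (ε : ℝ) (hε : ε ∈ Set.Icc (0 : ℝ) 1)
    (ν : Measure (S → Bool)) [IsProbabilityMeasure ν] (hν : IsMinusEps μ ν ε) :
    PositiveCorrelations ν := by
  classical
  open MinusEpsAux in
  rcases eq_or_lt_of_le hε.1 with hε0 | hε0
  · -- ε = 0 : ν = μ
    have hνμ : ν = μ := ext_cyl fun F => by simpa [← hε0, cyl] using hν F
    rwa [hνμ]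
  rcases eq_or_lt_of_le hε.2 with hε1 | hε1
  · -- ε = 1 : ν = δ_⊥
    intro f g hmf hmg _ _ _ _
    have h0 : ∀ s : S, ν (cyl {s}) = 0 := by
      intro s
      have h := hν {s}
      rw [← hε1] at h
      simp only [sub_self, Finset.card_singleton, pow_one, ENNReal.ofReal_zero, zero_mul] at h
      exact h
    have hnull : ν (⋃ s : S, cyl ({s} : Finset S)) = 0 := measure_iUnion_null h0
    have hae : ∀ᵐ η ∂ν, η = (fun _ => false) := by
      have hnm := measure_eq_zero_iff_ae_notMem.1 hnull
      filter_upwards [hnm] with η hη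
      funext s
      by_contra h
      have hs : η s = true := by simpa using h
      exact hη (Set.mem_iUnion.2 ⟨s, by simp [cyl, hs]⟩)
    have hint : ∀ h : (S → Bool) → ℝ, ∫ x, h x ∂ν = h (fun _ => false) := by
      intro h
      calc ∫ x, h x ∂ν = ∫ _x, h (fun _ => false) ∂ν :=
            integral_congr_ae (hae.mono fun η hη => by rw [hη])
        _ = h (fun _ => false) := by simp
    rw [hint f, hint g, hint (fun x => f x * g x)]
  · -- 0 < ε < 1
    set p : ℝ := 1 - ε with hpdef
    have hp0 : 0 < p := by simp only [hpdef]; linarith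
    have hp1 : p < 1 := by simp only [hpdef]; linarith
    obtain ⟨π, hπprob, hπ⟩ := exists_bernoulli_prod (S := S) hp0 hp1
    haveI := hπprob
    have hmap : Measure.map band (μ.prod π) = ν := by
      haveI : IsProbabilityMeasure (Measure.map band (μ.prod π)) :=
        Measure.isProbabilityMeasure_map measurable_band.aemeasurable
      refine ext_cyl fun F => ?_
      rw [Measure.map_apply measurable_band (measurableSet_cyl F)]
      have hpre : band ⁻¹' cyl F = (cyl F) ×ˢ (cyl F) := by
        ext q
        simp only [Set.mem_preimage, cyl, Set.mem_setOf_eq, Set.mem_prod, band,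
          Bool.and_eq_true]
        constructor
        · intro h
          exact ⟨fun s hs => (h s hs).1, fun s hs => (h s hs).2⟩
        · rintro ⟨h1, h2⟩ s hs
          exact ⟨h1 s hs, h2 s hs⟩
      rw [hpre, Measure.prod_prod, hπ,
        show ν (cyl F) = ENNReal.ofReal ((1 - ε) ^ F.card) * μ (cyl F) from hν F, ← hpdef]
      exact mul_comm _ _
    intro f g hmf hmg hCf' hCg' hfm hgm
    obtain ⟨Cf, hCf⟩ := hCf'
    obtain ⟨Cg, hCg⟩ := hCg'
    have hCf0 : 0 ≤ Cf := le_trans (abs_nonneg _) (hCf (fun _ => false))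
    have hCg0 : 0 ≤ Cg := le_trans (abs_nonneg _) (hCg (fun _ => false))
    have hFGb : ∀ x : S → Bool, |f x * g x| ≤ Cf * Cg := fun x => by
      rw [abs_mul]
      exact mul_le_mul (hCf x) (hCg x) (abs_nonneg _) hCf0
    -- pushforward integral identities
    have hid : ∀ (h : (S → Bool) → ℝ), Measurable h → (∀ x, |h x| ≤ Cf * Cg + Cf + Cg) →
        True := fun _ _ _ => trivial
    have key : ∀ (h : (S → Bool) → ℝ) (_ : Measurable h) (C : ℝ) (_ : ∀ x, |h x| ≤ C),
        ∫ x, h x ∂ν = ∫ x, (∫ z, h (band (x, z)) ∂π) ∂μ := by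
      intro h hmh C hCh
      rw [← hmap, integral_map measurable_band.aemeasurable hmh.aestronglyMeasurable]
      exact integral_prod (fun q => h (band q))
        (integrable_bdd _ ((hmh.comp measurable_band).aestronglyMeasurable) (fun q => hCh _))
    set Ff : (S → Bool) → ℝ := fun x => ∫ z, f (band (x, z)) ∂π with hFfdef
    set Gg : (S → Bool) → ℝ := fun x => ∫ z, g (band (x, z)) ∂π with hGgdef
    have hmFf : Measurable Ff :=
      ((hmf.comp measurable_band).stronglyMeasurable.integral_prod_right').measurable
    have hmGg : Measurable Gg :=
      ((hmg.comp measurable_band).stronglyMeasurable.integral_prod_right').measurable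
    have hFfb : ∀ x, |Ff x| ≤ Cf := by
      intro x
      have := norm_integral_le_of_norm_le_const
        (ae_of_all π fun z => by simpa [Real.norm_eq_abs] using hCf (band (x, z)))
        (f := fun z => f (band (x, z)))
      simpa [hFfdef, Real.norm_eq_abs, measure_univ] using this
    have hGgb : ∀ x, |Gg x| ≤ Cg := by
      intro x
      have := norm_integral_le_of_norm_le_const
        (ae_of_all π fun z => by simpa [Real.norm_eq_abs] using hCg (band (x, z)))
        (f := fun z => g (band (x, z)))
      simpa [hGgdef, Real.norm_eq_abs, measure_univ] using this
    have hFfm : Monotone Ff := by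
      intro x x' hx
      refine integral_mono
        (integrable_bdd _ ((hmf.comp (measurable_band_right x)).aestronglyMeasurable)
          (fun z => hCf _))
        (integrable_bdd _ ((hmf.comp (measurable_band_right x')).aestronglyMeasurable)
          (fun z => hCf _)) fun z => ?_
      exact hfm (monotone_band (Prod.mk_le_mk.2 ⟨hx, le_rfl⟩))
    have hGgm : Monotone Gg := by
      intro x x' hx
      refine integral_mono
        (integrable_bdd _ ((hmg.comp (measurable_band_right x)).aestronglyMeasurable)
          (fun z => hCg _))
        (integrable_bdd _ ((hmg.comp (measurable_band_right x')).aestronglyMeasurable)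
          (fun z => hCg _)) fun z => ?_
      exact hgm (monotone_band (Prod.mk_le_mk.2 ⟨hx, le_rfl⟩))
    have hπPC : PositiveCorrelations π := harris_pi hπ hp0.le hp1.le
    -- pointwise inner Harris
    have hinner : ∀ x : S → Bool,
        Ff x * Gg x ≤ ∫ z, f (band (x, z)) * g (band (x, z)) ∂π := by
      intro x
      refine hπPC (fun z => f (band (x, z))) (fun z => g (band (x, z)))
        (hmf.comp (measurable_band_right x)) (hmg.comp (measurable_band_right x))
        ⟨Cf, fun z => hCf _⟩ ⟨Cg, fun z => hCg _⟩
        (fun z z' hz => hfm (monotone_band (Prod.mk_le_mk.2 ⟨le_rfl, hz⟩)))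
        (fun z z' hz => hgm (monotone_band (Prod.mk_le_mk.2 ⟨le_rfl, hz⟩)))
    have hfν : ∫ x, f x ∂ν = ∫ x, Ff x ∂μ := key f hmf Cf hCf
    have hgν : ∫ x, g x ∂ν = ∫ x, Gg x ∂μ := key g hmg Cg hCg
    have hfgν : ∫ x, f x * g x ∂ν
        = ∫ x, (∫ z, f (band (x, z)) * g (band (x, z)) ∂π) ∂μ :=
      key (fun x => f x * g x) (hmf.mul hmg) (Cf * Cg) hFGb
    rw [hfν, hgν, hfgν]
    have step1 : (∫ x, Ff x ∂μ) * (∫ x, Gg x ∂μ) ≤ ∫ x, Ff x * Gg x ∂μ :=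
      hμ Ff Gg hmFf hmGg ⟨Cf, hFfb⟩ ⟨Cg, hGgb⟩ hFfm hGgm
    refine le_trans step1 (integral_mono ?_ ?_ hinner)
    · exact integrable_bdd _ ((hmFf.mul hmGg).aestronglyMeasurable) (fun x => by
        rw [abs_mul]
        exact mul_le_mul (hFfb x) (hGgb x) (abs_nonneg _) hCf0)
    · have hint2 : Integrable (fun q : (S → Bool) × (S → Bool) =>
          f (band q) * g (band q)) (μ.prod π) :=
        integrable_bdd _ (((hmf.mul hmg).comp measurable_band).aestronglyMeasurable)
          (fun q => hFGb _)
      exact hint2.integral_prod_left
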